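/- arXiv:1511.07541 — 6 statements merged into one kernel-verified Lean document; each statement's English description precedes it below -/
import Mathlib

section
/- Let F be a forest with k connected components and let w_1,...,w_k be vertices chosen from distinct connected components of F. Let H be a graph with minimum degree at least |V(F)| - 1 and let u_1,...,u_k be distinct vertices of H. Then there is an injective graph homomorphism (embedding) of F into H mapping w_i to u_i for all 1 ≤ i ≤ k. -/
open SimpleGraph Finset


private lemma my_concat_isPath {α : Type*} {F : SimpleGraph α} {a b c : α}
    {Q : F.Walk a b} (hQ : Q.IsPath) (h : F.Adj b c) (hc : c ∉ Q.support) :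
    (Q.concat h).IsPath := by
  rw [← Walk.isPath_reverse_iff, Walk.reverse_concat]
  exact hQ.reverse.cons (by simpa using hc)

private lemma my_frontier {α : Type*} {F : SimpleGraph α} (s : Finset α)
    {r v : α} (P : F.Walk r v) : P.IsPath → r ∈ s → v ∉ s →
    ∃ p y, p ∈ s ∧ y ∉ s ∧ ∃ (h' : F.Adj p y) (Q : F.Walk r p),
      (∀ z ∈ Q.support, z ∈ s) ∧ (Q.concat h').IsPath ∧
      ∀ z ∈ (Q.concat h').support, z ∈ P.support := by
  induction P with
  | nil => intro _ hr hv; exact absurd hr hv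
  | @cons a c d h P' ih =>
    intro hP hr hv
    by_cases hc : c ∈ s
    · obtain ⟨p, y, hp, hy, h', Q, hQs, hQp, hQsub⟩ := ih hP.of_cons hc hv
      have ha : a ∉ (Q.concat h').support := fun hmem =>
        ((Walk.cons_isPath_iff h P').mp hP).2 (hQsub a hmem)
      refine ⟨p, y, hp, hy, h', Walk.cons h Q, ?_, ?_, ?_⟩
      · intro z hz
        rw [Walk.support_cons, List.mem_cons] at hz
        rcases hz with h1 | h1
        · exact h1 ▸ hr
        · exact hQs z h1
      · rw [Walk.concat_cons]
        exact hQp.cons ha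
      · intro z hz
        rw [Walk.concat_cons, Walk.support_cons, List.mem_cons] at hz
        rw [Walk.support_cons, List.mem_cons]
        rcases hz with h1 | h1
        · exact Or.inl h1
        · exact Or.inr (hQsub z h1)
    · refine ⟨a, c, hr, hc, h, Walk.nil, ?_, ?_, ?_⟩
      · intro z hz
        simp only [Walk.support_nil, List.mem_singleton] at hz
        exact hz ▸ hr
      · rw [Walk.concat_nil]
        refine Walk.IsPath.nil.cons ?_
        simp only [Walk.support_nil, List.mem_singleton]
        exact fun he => hc (he ▸ hr)
      · intro z hz
        rw [Walk.concat_nil, Walk.support_cons, List.mem_cons] at hz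
        rw [Walk.support_cons, List.mem_cons]
        rcases hz with h1 | h1
        · exact Or.inl h1
        · simp only [Walk.support_nil, List.mem_singleton] at h1
          subst h1
          exact Or.inr P'.start_mem_support


/-- Let `F` be a forest with `k` connected components and `w 0, ..., w (k-1)` vertices
from distinct components (one from each). If `H` has minimum degree at least `|V(F)| - 1`
and `u 0, ..., u (k-1)` are distinct vertices of `H`, then `F` embeds into `H` with each
`w i` mapped to `u i`. -/
theorem stmt_1 {α β : Type*} [Fintype α] [Fintype β]
    (F : SimpleGraph α) (hF : F.IsAcyclic)
    (H : SimpleGraph β) [DecidableRel H.Adj]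
    (k : ℕ) (w : Fin k → α)
    (hw : Function.Bijective (fun i => F.connectedComponentMk (w i)))
    (hδ : Fintype.card α - 1 ≤ H.minDegree)
    (u : Fin k → β) (hu : Function.Injective u) :
    ∃ f : F →g H, Function.Injective f ∧ ∀ i : Fin k, f (w i) = u i := by
  classical
  rcases isEmpty_or_nonempty α with hα | hα
  · exact ⟨⟨fun x => isEmptyElim x, fun {a b} h => isEmptyElim a⟩,
      fun a => isEmptyElim a, fun i => isEmptyElim (w i)⟩
  have hβ : Nonempty β := by
    obtain ⟨i, -⟩ := hw.2 (F.connectedComponentMk (Classical.arbitrary α))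
    exact ⟨u i⟩
  have hwi : Function.Injective w := fun i j h => hw.1 (by simp [h])
  set idx : α → Fin k := fun x => (hw.2 (F.connectedComponentMk x)).choose with hidxdef
  have hidx : ∀ x, F.connectedComponentMk (w (idx x)) = F.connectedComponentMk x :=
    fun x => (hw.2 (F.connectedComponentMk x)).choose_spec
  have key : ∀ (m : ℕ) (s : Finset α) (f : α → β),
      Fintype.card α ≤ s.card + m →
      (∀ i, w i ∈ s) →
      (∀ x ∈ s, ∀ (j : Fin k) (P : F.Walk (w j) x), P.IsPath → ∀ z ∈ P.support, z ∈ s) →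
      Set.InjOn f ↑s →
      (∀ x ∈ s, ∀ y ∈ s, F.Adj x y → H.Adj (f x) (f y)) →
      (∀ i, f (w i) = u i) →
      ∃ g : α → β, Function.Injective g ∧ (∀ x y, F.Adj x y → H.Adj (g x) (g y)) ∧
        ∀ i, g (w i) = u i := by
    intro m
    induction m with
    | zero =>
      intro s f hcard hroots hclosed hinj hadj hrootmap
      have hs : s = Finset.univ := Finset.eq_univ_of_card s
        (le_antisymm (by simpa using Finset.card_le_univ s) (by simpa using hcard))
      refine ⟨f, ?_, ?_, hrootmap⟩
      · intro a b hab
        exact hinj (by simp [hs]) (by simp [hs]) hab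
      · intro x y hxy
        exact hadj x (by simp [hs]) y (by simp [hs]) hxy
    | succ m ih =>
      intro s f hcard hroots hclosed hinj hadj hrootmap
      by_cases hs : s = Finset.univ
      · exact ih s f (by simp [hs, Finset.card_univ]) hroots hclosed hinj hadj hrootmap
      obtain ⟨v, hv⟩ : ∃ v, v ∉ s := by
        by_contra h; push_neg at h; exact hs (Finset.eq_univ_iff_forall.mpr h)
      have hreach : F.Reachable (w (idx v)) v := ConnectedComponent.eq.mp (hidx v)
      obtain ⟨P0⟩ := hreach
      obtain ⟨p, y, hp, hy, hpy, Q, hQs, hQp, -⟩ :=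
        my_frontier s (P0.toPath : F.Walk _ _) P0.toPath.2 (hroots (idx v)) hv
      have hcomp_y : F.connectedComponentMk (w (idx v)) = F.connectedComponentMk y :=
        ConnectedComponent.eq.mpr (Q.reachable.trans hpy.reachable)
      -- uniqueness of the neighbor of `y` inside `s`
      have huniq : ∀ b ∈ s, F.Adj y b → b = p := by
        intro b hb hby
        have hr : F.Reachable (w (idx v)) b :=
          (Q.reachable.trans hpy.reachable).trans hby.reachable
        obtain ⟨R0⟩ := hr
        have hRpath : (R0.toPath : F.Walk (w (idx v)) b).IsPath := R0.toPath.2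
        have hRs : ∀ z ∈ (R0.toPath : F.Walk (w (idx v)) b).support, z ∈ s :=
          hclosed b hb (idx v) (R0.toPath : F.Walk (w (idx v)) b) hRpath
        have hyR : y ∉ (R0.toPath : F.Walk (w (idx v)) b).support := fun hmem => hy (hRs y hmem)
        have hRp : ((R0.toPath : F.Walk (w (idx v)) b).concat hby.symm).IsPath :=
          my_concat_isPath hRpath hby.symm hyR
        have hEq : (R0.toPath : F.Walk (w (idx v)) b).concat hby.symm = Q.concat hpy :=
          Subtype.ext_iff.mp (hF.path_unique ⟨_, hRp⟩ ⟨_, hQp⟩)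
        have hsup := congrArg (fun (W : F.Walk (w (idx v)) y) => W.reverse.support) hEq
        simp only [Walk.reverse_concat, Walk.support_cons] at hsup
        rw [Walk.support_eq_cons (R0.toPath : F.Walk (w (idx v)) b).reverse,
          Walk.support_eq_cons Q.reverse] at hsup
        simp only [List.cons.injEq] at hsup
        exact hsup.2.1
      have hcards : s.card < Fintype.card α := by
        have h1 : s ⊂ Finset.univ := Finset.ssubset_univ_iff.mpr hs
        simpa using Finset.card_lt_card h1
      set T := s.image f with hT
      have hTcard : T.card = s.card := Finset.card_image_of_injOn hinj
      have hfp_mem : f p ∈ T := Finset.mem_image_of_mem f hp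
      have hNT : (H.neighborFinset (f p) \ T).Nonempty := by
        have h1 : H.neighborFinset (f p) ∩ T ⊆ T.erase (f p) := by
          intro x hx
          rw [Finset.mem_inter] at hx
          obtain ⟨hx1, hx2⟩ := hx
          simp only [SimpleGraph.mem_neighborFinset] at hx1
          refine Finset.mem_erase.mpr ⟨fun hxe => ?_, hx2⟩
          rw [hxe] at hx1
          exact H.irrefl hx1
        have h2 := Finset.card_sdiff_add_card_inter (H.neighborFinset (f p)) T
        have h3 : Fintype.card α - 1 ≤ (H.neighborFinset (f p)).card := by
          rw [H.card_neighborFinset_eq_degree]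
          exact le_trans hδ (H.minDegree_le_degree (f p))
        have h4 : (T.erase (f p)).card = s.card - 1 := by
          rw [Finset.card_erase_of_mem hfp_mem, hTcard]
        have h5 : 1 ≤ s.card := Finset.card_pos.mpr ⟨p, hp⟩
        have h6 := Finset.card_le_card h1
        rw [← Finset.card_pos]
        omega
      obtain ⟨b, hb⟩ := hNT
      rw [Finset.mem_sdiff] at hb
      rw [SimpleGraph.mem_neighborFinset] at hb
      set f' := Function.update f y b with hf'
      have hfeq : ∀ x ∈ s, f' x = f x := by
        intro x hx
        refine Function.update_of_ne ?_ _ _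
        rintro rfl
        exact hy hx
      have hf'y : f' y = b := Function.update_self _ _ _
      apply ih (insert y s) f'
      · rw [Finset.card_insert_of_notMem hy]; omega
      · intro i; exact Finset.mem_insert_of_mem (hroots i)
      · intro x hx j P hP z hz
        rcases Finset.mem_insert.mp hx with rfl | hxs
        · have hj : j = idx v := by
            apply hw.1
            show F.connectedComponentMk (w j) = F.connectedComponentMk (w (idx v))
            rw [hcomp_y]
            exact ConnectedComponent.eq.mpr P.reachable
          subst hj
          have hPQ : P = Q.concat hpy :=
            Subtype.ext_iff.mp (hF.path_unique ⟨P, hP⟩ ⟨Q.concat hpy, hQp⟩)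
          rw [hPQ, Walk.support_concat] at hz
          rcases List.mem_append.mp hz with h1 | h1
          · exact Finset.mem_insert_of_mem (hQs z h1)
          · rw [List.mem_singleton] at h1
            exact h1 ▸ Finset.mem_insert_self _ _
        · exact Finset.mem_insert_of_mem (hclosed x hxs j P hP z hz)
      · intro x₁ hx₁ x₂ hx₂ hfx
        simp only [Finset.coe_insert, Set.mem_insert_iff, Finset.mem_coe] at hx₁ hx₂
        rcases hx₁ with rfl | hx₁ <;> rcases hx₂ with rfl | hx₂
        · rfl
        · exfalso
          have hbe : b = f x₂ := by rw [← hf'y, hfx, hfeq x₂ hx₂]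
          exact hb.2 (hbe ▸ Finset.mem_image_of_mem f hx₂)
        · exfalso
          have hbe : b = f x₁ := by rw [← hf'y, ← hfx, hfeq x₁ hx₁]
          exact hb.2 (hbe ▸ Finset.mem_image_of_mem f hx₁)
        · exact hinj hx₁ hx₂ (by rwa [hfeq x₁ hx₁, hfeq x₂ hx₂] at hfx)
      · intro x₁ hx₁ x₂ hx₂ hxy
        rcases Finset.mem_insert.mp hx₁ with rfl | h₁ <;> rcases Finset.mem_insert.mp hx₂ with rfl | h₂
        · exact (F.irrefl hxy).elim
        · have hx2p : x₂ = p := huniq x₂ h₂ hxy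
          subst hx2p
          rw [hf'y, hfeq x₂ hp]
          exact hb.1.symm
        · have hx1p : x₁ = p := huniq x₁ h₁ hxy.symm
          subst hx1p
          rw [hf'y, hfeq x₁ hp]
          exact hb.1
        · rw [hfeq x₁ h₁, hfeq x₂ h₂]
          exact hadj x₁ h₁ x₂ h₂ hxy
      · intro i
        rw [hfeq (w i) (hroots i)]
        exact hrootmap i
  -- base case: the roots
  set s₀ := Finset.image w Finset.univ with hs₀
  set f₀ : α → β := fun x => if h : ∃ i, w i = x then u h.choose else Classical.arbitrary β
    with hf₀
  have hf₀w : ∀ i, f₀ (w i) = u i := by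
    intro i
    have h : ∃ j, w j = w i := ⟨i, rfl⟩
    have hch : h.choose = i := hwi h.choose_spec
    simp only [hf₀, dif_pos h, hch]
  have hroots₀ : ∀ i, w i ∈ s₀ := fun i => Finset.mem_image_of_mem w (Finset.mem_univ i)
  have hclosed₀ : ∀ x ∈ s₀, ∀ (j : Fin k) (P : F.Walk (w j) x), P.IsPath →
      ∀ z ∈ P.support, z ∈ s₀ := by
    intro x hx j P hP z hz
    obtain ⟨i, -, rfl⟩ := Finset.mem_image.mp hx
    have hj : j = i := hw.1 (ConnectedComponent.eq.mpr P.reachable)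
    subst hj
    have hnil : P = Walk.nil :=
      Subtype.ext_iff.mp (hF.path_unique ⟨P, hP⟩ ⟨Walk.nil, Walk.IsPath.nil⟩)
    rw [hnil] at hz
    simp only [Walk.support_nil, List.mem_singleton] at hz
    exact hz ▸ hroots₀ j
  have hinj₀ : Set.InjOn f₀ ↑s₀ := by
    intro x₁ hx₁ x₂ hx₂ heq
    simp only [Finset.coe_image, Finset.coe_univ, Set.image_univ, Set.mem_range, hs₀] at hx₁ hx₂
    obtain ⟨i, rfl⟩ := hx₁
    obtain ⟨j, rfl⟩ := hx₂
    rw [hf₀w i, hf₀w j] at heq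
    exact congrArg w (hu heq)
  have hadj₀ : ∀ x ∈ s₀, ∀ y ∈ s₀, F.Adj x y → H.Adj (f₀ x) (f₀ y) := by
    intro x hx y hy hxy
    obtain ⟨i, -, rfl⟩ := Finset.mem_image.mp hx
    obtain ⟨j, -, rfl⟩ := Finset.mem_image.mp hy
    have : i = j := hw.1 (ConnectedComponent.eq.mpr hxy.reachable)
    subst this
    exact (F.irrefl hxy).elim
  obtain ⟨g, hg1, hg2, hg3⟩ := key (Fintype.card α) s₀ f₀ (Nat.le_add_left _ _)
    hroots₀ hclosed₀ hinj₀ hadj₀ hf₀w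
  exact ⟨⟨g, fun {a b} h => hg2 a b h⟩, hg1, hg3⟩
end

section
/- Every tree T with at least 3 vertices contains a vertex v such that the vertex set of the forest T - v can be partitioned into two disjoint sets K and H with no edges between K and H, satisfying (|V(T)|-1)/3 ≤ |K| ≤ 2(|V(T)|-1)/3 and (|V(T)|-1)/3 ≤ |H| ≤ 2(|V(T)|-1)/3. -/
set_option linter.unusedSectionVars false

open Finset SimpleGraph

namespace Stmt2Aux

variable {V : Type*} [Fintype V] [DecidableEq V] (T : SimpleGraph V)

open Classical in
/-- The set of vertices reachable from `u` by a walk avoiding `v`. -/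
noncomputable def comp (v u : V) : Finset V :=
  Finset.univ.filter fun x => ∃ p : T.Walk u x, v ∉ p.support

variable {T}

lemma mem_comp {v u x : V} : x ∈ comp T v u ↔ ∃ p : T.Walk u x, v ∉ p.support := by
  simp [comp]

lemma self_mem_comp {v u : V} (h : u ≠ v) : u ∈ comp T v u :=
  mem_comp.2 ⟨Walk.nil, by simp [h.symm]⟩

lemma ne_of_mem_comp {v u x : V} (h : x ∈ comp T v u) : x ≠ v := by
  obtain ⟨p, hp⟩ := mem_comp.1 h
  exact fun hx => hp (hx ▸ p.end_mem_support)

lemma mem_comp_trans {v u x y : V} (hx : x ∈ comp T v u) (hy : y ∈ comp T v x) :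
    y ∈ comp T v u := by
  obtain ⟨p, hp⟩ := mem_comp.1 hx
  obtain ⟨q, hq⟩ := mem_comp.1 hy
  exact mem_comp.2 ⟨p.append q, by
    rw [Walk.support_append]
    simp only [List.mem_append]
    rintro (h | h)
    · exact hp h
    · exact hq (List.mem_of_mem_tail h)⟩

lemma mem_comp_symm {v u x : V} (hx : x ∈ comp T v u) : u ∈ comp T v x := by
  obtain ⟨p, hp⟩ := mem_comp.1 hx
  exact mem_comp.2 ⟨p.reverse, by rwa [Walk.support_reverse, List.mem_reverse]⟩

lemma comp_eq_of_mem {v a b x : V} (ha : x ∈ comp T v a) (hb : x ∈ comp T v b) :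
    comp T v a = comp T v b := by
  ext y
  constructor
  · intro hy
    exact mem_comp_trans hb (mem_comp_trans (mem_comp_symm ha) hy)
  · intro hy
    exact mem_comp_trans ha (mem_comp_trans (mem_comp_symm hb) hy)

lemma adj_mem_comp {v u x y : V} (hx : x ∈ comp T v u) (hadj : T.Adj x y) (hy : y ≠ v) :
    y ∈ comp T v u := by
  obtain ⟨p, hp⟩ := mem_comp.1 hx
  exact mem_comp.2 ⟨p.concat hadj, by
    rw [Walk.support_concat]
    intro h
    rcases List.mem_append.1 h with h | h
    · exact hp h
    · exact hy.symm (by simpa using h)⟩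

/-- In an acyclic graph, no walk between two adjacent vertices avoids the connecting edge. -/
lemma no_detour (hA : T.IsAcyclic) {u w : V} (hadj : T.Adj u w) (p : T.Walk u w)
    (hp : s(u, w) ∉ p.edges) : False := by
  have hb : T.IsBridge s(u, w) :=
    (isAcyclic_iff_forall_edge_isBridge.1 hA) hadj
  exact (isBridge_iff.1 hb) (reachable_delete_edges_iff_exists_walk.2 ⟨p, hp⟩)

/-- For adjacent `u v`, the components of `u` in `T - v` and of `v` in `T - u` are disjoint. -/
lemma comp_disjoint (hA : T.IsAcyclic) {u v : V} (hadj : T.Adj u v) :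
    Disjoint (comp T v u) (comp T u v) := by
  rw [Finset.disjoint_left]
  intro x hx hx'
  obtain ⟨p, hp⟩ := mem_comp.1 hx
  obtain ⟨q, hq⟩ := mem_comp.1 hx'
  apply no_detour hA hadj (p.append q.reverse)
  rw [Walk.edges_append, Walk.edges_reverse]
  simp only [List.mem_append, List.mem_reverse]
  rintro (h | h)
  · exact hp (p.snd_mem_support_of_mem_edges h)
  · exact hq (q.fst_mem_support_of_mem_edges h)

/-- For adjacent `u v`, the two components cover everything. -/
lemma comp_union (hT : T.IsTree) {u v : V} (hadj : T.Adj u v) :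
    comp T v u ∪ comp T u v = Finset.univ := by
  ext x
  simp only [Finset.mem_union, Finset.mem_univ, iff_true]
  obtain ⟨w⟩ := hT.isConnected.preconnected u x
  set P := w.toPath with hP
  by_cases hv : v ∈ (P : T.Walk u x).support
  · right
    refine mem_comp.2 ⟨(P : T.Walk u x).dropUntil v hv, fun hu => ?_⟩
    have hnd := P.2.support_nodup
    rw [← Walk.take_spec (P : T.Walk u x) hv, Walk.support_append] at hnd
    rcases (Walk.support_eq_cons ((P : T.Walk u x).dropUntil v hv)) ▸ hu with h
    rw [Walk.support_eq_cons ((P : T.Walk u x).dropUntil v hv)] at hu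
    rcases List.mem_cons.1 hu with h | h
    · exact hadj.ne h
    · have hu1 : u ∈ ((P : T.Walk u x).takeUntil v hv).support :=
        Walk.start_mem_support _
      exact (List.nodup_append.1 hnd).2.2 u hu1 u h rfl
  · left
    exact mem_comp.2 ⟨P, hv⟩

lemma comp_card_add (hT : T.IsTree) {u v : V} (hadj : T.Adj u v) :
    (comp T v u).card + (comp T u v).card = Fintype.card V := by
  rw [← Finset.card_union_of_disjoint (comp_disjoint hT.IsAcyclic hadj), comp_union hT hadj,
    Finset.card_univ]

/-- Every vertex other than `v` lies in the component of some neighbor of `v`. -/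
lemma exists_neighbor_comp (hT : T.IsTree) {v x : V} (hx : x ≠ v) :
    ∃ u, T.Adj v u ∧ x ∈ comp T v u := by
  obtain ⟨w⟩ := hT.isConnected.preconnected v x
  set P := w.toPath with hP
  cases hq : (P : T.Walk v x) with
  | nil => exact absurd rfl hx.symm
  | cons h q =>
    refine ⟨_, h, mem_comp.2 ⟨q, fun hv => ?_⟩⟩
    have hnd := P.2.support_nodup
    rw [hq, Walk.support_cons] at hnd
    exact (List.nodup_cons.1 hnd).1 hv

/-- Key descent inclusion: if `u ~ v` and `u ~ w` with `w ≠ v`, then the component of `w`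
in `T - u` sits inside the component of `u` in `T - v`, minus `u`. -/
lemma comp_subset_erase (hA : T.IsAcyclic) {u v w : V} (huv : T.Adj u v) (huw : T.Adj u w)
    (hwv : w ≠ v) : comp T u w ⊆ (comp T v u).erase u := by
  have hwnotin : w ∉ comp T u v := by
    intro hcontra
    obtain ⟨q, hq⟩ := mem_comp.1 hcontra
    apply no_detour hA huw (Walk.cons huv q)
    rw [Walk.edges_cons]
    intro h
    rcases List.mem_cons.1 h with h | h
    · rw [Sym2.eq_iff] at h
      rcases h with ⟨-, h⟩ | ⟨h, -⟩
      · exact hwv h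
      · exact huv.ne h
    · exact hq (q.fst_mem_support_of_mem_edges h)
  intro x hx
  obtain ⟨q, hq⟩ := mem_comp.1 hx
  have hvq : v ∉ q.support := by
    intro hv
    apply hwnotin
    refine mem_comp_symm (mem_comp.2 ⟨q.takeUntil v hv, fun hu => ?_⟩)
    exact hq (Walk.support_takeUntil_subset q hv hu)
  refine Finset.mem_erase.2 ⟨ne_of_mem_comp hx, ?_⟩
  · exact mem_comp.2 ⟨Walk.cons huw q, by
      rw [Walk.support_cons]
      intro h
      rcases List.mem_cons.1 h with h | h
      · exact huv.ne h.symm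
      · exact hvq h⟩

open Classical in
/-- Maximum component size after deleting `v`. -/
noncomputable def msize (T : SimpleGraph V) (v : V) : ℕ :=
  Finset.univ.sup fun u => if T.Adj v u then (comp T v u).card else 0

lemma exists_centroid (hT : T.IsTree) (hcard : 3 ≤ Fintype.card V) :
    ∃ v : V, ∀ x : V, x ≠ v → 2 * (comp T v x).card ≤ Fintype.card V := by
  classical
  have hne : Nonempty V := Fintype.card_pos_iff.1 (by omega)
  obtain ⟨v, -, hmin⟩ := Finset.exists_min_image Finset.univ (msize T)
    ⟨Classical.arbitrary V, Finset.mem_univ _⟩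
  have hM : 2 * msize T v ≤ Fintype.card V := by
    by_contra hlt
    push_neg at hlt
    have hMpos : 0 < msize T v := by omega
    obtain ⟨u₀, -, hu₀⟩ := Finset.exists_mem_eq_sup Finset.univ Finset.univ_nonempty
      (fun u => if T.Adj v u then (comp T v u).card else 0)
    have hadj : T.Adj v u₀ := by
      by_contra h
      rw [show msize T v = _ from hu₀, if_neg h] at hMpos
      omega
    have hcardu : (comp T v u₀).card = msize T v := by
      rw [show msize T v = _ from hu₀, if_pos hadj]
    have hlt2 : msize T u₀ < msize T v := by
      refine (Finset.sup_lt_iff (show (⊥ : ℕ) < msize T v from hMpos)).2 ?_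
      intro w _
      by_cases haw : T.Adj u₀ w
      · rw [if_pos haw]
        by_cases hwv : w = v
        · subst hwv
          have := comp_card_add hT hadj.symm
          omega
        · have hsub := comp_subset_erase hT.IsAcyclic hadj.symm haw hwv
          have hle := Finset.card_le_card hsub
          rw [Finset.card_erase_of_mem (self_mem_comp hadj.ne')] at hle
          omega
      · rw [if_neg haw]; exact hMpos
    exact absurd (hmin u₀ (Finset.mem_univ _)) (by omega)
  refine ⟨v, fun x hx => ?_⟩
  obtain ⟨u, hu, hxu⟩ := exists_neighbor_comp hT hx
  have hcx : comp T v x = comp T v u := comp_eq_of_mem (self_mem_comp hx) hxu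
  have hle : (comp T v u).card ≤ msize T v := by
    have h := Finset.le_sup (f := fun u => if T.Adj v u then (comp T v u).card else 0)
      (Finset.mem_univ u)
    simp only [if_pos hu] at h
    exact h
  rw [hcx]
  omega

lemma pack {α : Type*} [DecidableEq α] (s : Finset α) (f : α → ℕ)
    (h2 : ∀ a ∈ s, 3 * f a ≤ 2 * ∑ b ∈ s, f b) :
    ∃ t ⊆ s, (∑ b ∈ s, f b) ≤ 3 * ∑ b ∈ t, f b ∧
      3 * ∑ b ∈ t, f b ≤ 2 * ∑ b ∈ s, f b := by
  classical
  set S := ∑ b ∈ s, f b with hS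
  by_cases hbig : ∃ a ∈ s, S ≤ 3 * f a
  · obtain ⟨a, ha, hle⟩ := hbig
    refine ⟨{a}, Finset.singleton_subset_iff.2 ha, ?_, ?_⟩ <;>
      simp only [Finset.sum_singleton]
    · exact hle
    · exact h2 a ha
  · push_neg at hbig
    set P := s.powerset.filter fun t => S ≤ 3 * ∑ b ∈ t, f b with hP
    have hsP : s ∈ P := by
      simp only [hP, Finset.mem_filter, Finset.mem_powerset]
      exact ⟨Finset.Subset.refl s, by omega⟩
    obtain ⟨t, htP, hminP⟩ := Finset.exists_min_image P Finset.card ⟨s, hsP⟩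
    simp only [hP, Finset.mem_filter, Finset.mem_powerset] at htP
    obtain ⟨hts, htge⟩ := htP
    refine ⟨t, hts, htge, ?_⟩
    rcases Finset.eq_empty_or_nonempty t with rfl | ⟨a, hat⟩
    · simp only [Finset.sum_empty, mul_zero]; omega
    · have herase : ¬ (S ≤ 3 * ∑ b ∈ t.erase a, f b) := by
        intro hcontra
        have hmem : t.erase a ∈ P := by
          simp only [hP, Finset.mem_filter, Finset.mem_powerset]
          exact ⟨(Finset.erase_subset a t).trans hts, hcontra⟩
        have := hminP _ hmem
        have := Finset.card_erase_lt_of_mem hat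
        omega
      push_neg at herase
      have hsum : ∑ b ∈ t.erase a, f b + f a = ∑ b ∈ t, f b :=
        Finset.sum_erase_add t f hat
      have hfa := hbig a (hts hat)
      omega

theorem main {V : Type*} [Fintype V] [DecidableEq V] (T : SimpleGraph V)
    (hT : T.IsTree) (hcard : 3 ≤ Fintype.card V) :
    ∃ (v : V) (K H : Finset V), Disjoint K H ∧ K ∪ H = Finset.univ \ {v} ∧
      (∀ x ∈ K, ∀ y ∈ H, ¬ T.Adj x y) ∧
      Fintype.card V - 1 ≤ 3 * K.card ∧ 3 * K.card ≤ 2 * (Fintype.card V - 1) ∧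
      Fintype.card V - 1 ≤ 3 * H.card ∧ 3 * H.card ≤ 2 * (Fintype.card V - 1) := by
  classical
  obtain ⟨v, hv⟩ := exists_centroid hT hcard
  set n := Fintype.card V with hn
  set comps : Finset (Finset V) :=
    ((Finset.univ \ {v}).image fun x => comp T v x) with hcomps
  have hmemc : ∀ A ∈ comps, ∃ x, x ≠ v ∧ comp T v x = A := by
    intro A hA
    simp only [hcomps, Finset.mem_image, Finset.mem_sdiff, Finset.mem_univ, true_and,
      Finset.mem_singleton] at hA
    obtain ⟨x, hx, hxA⟩ := hA
    exact ⟨x, hx, hxA⟩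
  have hdisj : ∀ A ∈ comps, ∀ B ∈ comps, A ≠ B → Disjoint (id A) (id B) := by
    intro A hA B hB hAB
    obtain ⟨a, ha, rfl⟩ := hmemc A hA
    obtain ⟨b, hb, rfl⟩ := hmemc B hB
    rw [Finset.disjoint_left]
    intro x hxa hxb
    exact hAB (comp_eq_of_mem hxa hxb)
  have hbiU : comps.biUnion id = Finset.univ \ {v} := by
    ext x
    simp only [Finset.mem_biUnion, id, Finset.mem_sdiff, Finset.mem_univ, true_and,
      Finset.mem_singleton]
    constructor
    · rintro ⟨A, hA, hxA⟩
      obtain ⟨a, -, rfl⟩ := hmemc A hA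
      exact ne_of_mem_comp hxA
    · intro hx
      refine ⟨comp T v x, ?_, self_mem_comp hx⟩
      simp only [hcomps, Finset.mem_image, Finset.mem_sdiff, Finset.mem_univ, true_and,
        Finset.mem_singleton]
      exact ⟨x, hx, rfl⟩
  have hcards : (Finset.univ \ {v} : Finset V).card = n - 1 := by
    rw [Finset.card_sdiff_of_subset (Finset.singleton_subset_iff.2 (Finset.mem_univ v))]
    simp [hn]
  have hsum : ∑ A ∈ comps, A.card = n - 1 := by
    have := Finset.card_biUnion hdisj
    simp only [id] at this
    rw [← this, hbiU, hcards]
  have hsmall : ∀ A ∈ comps, 3 * A.card ≤ 2 * ∑ B ∈ comps, B.card := by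
    intro A hA
    obtain ⟨a, ha, rfl⟩ := hmemc A hA
    have := hv a ha
    rw [hsum]
    omega
  obtain ⟨t, hts, h1, h2⟩ := pack comps Finset.card hsmall
  rw [hsum] at h1 h2
  set K := t.biUnion id with hK
  have hKcard : K.card = ∑ A ∈ t, A.card := by
    have := Finset.card_biUnion (fun A hA B hB hAB => hdisj A (hts hA) B (hts hB) hAB)
    simpa [hK] using this
  have hKsub : K ⊆ Finset.univ \ {v} := by
    rw [← hbiU]
    exact Finset.biUnion_subset_biUnion_of_subset_left id hts
  set H := (Finset.univ \ {v}) \ K with hH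
  have hHcard : H.card = (n - 1) - K.card := by
    rw [hH, Finset.card_sdiff_of_subset hKsub, hcards]
  have hKle : K.card ≤ n - 1 := hcards ▸ Finset.card_le_card hKsub
  refine ⟨v, K, H, Finset.disjoint_sdiff, ?_, ?_, ?_, ?_, ?_, ?_⟩
  · exact Finset.union_sdiff_of_subset hKsub
  · intro x hx y hy hadj
    obtain ⟨A, hAt, hxA⟩ := Finset.mem_biUnion.1 hx
    simp only [id] at hxA
    obtain ⟨a, ha, rfl⟩ := hmemc A (hts hAt)
    have hyv : y ≠ v := by
      have := (Finset.mem_sdiff.1 hy).1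
      simpa using (Finset.mem_sdiff.1 this).2
    have hyK : y ∈ K := Finset.mem_biUnion.2 ⟨_, hAt, adj_mem_comp hxA hadj hyv⟩
    exact (Finset.mem_sdiff.1 hy).2 hyK
  · omega
  · omega
  · omega
  · omega

end Stmt2Aux


/-- Every tree `T` with at least 3 vertices has a vertex `v` such that the vertices of
`T - v` can be partitioned into sets `K` and `H` with no edges between them, each of
size between `(|V(T)|-1)/3` and `2(|V(T)|-1)/3`. -/
theorem stmt_2 {V : Type*} [Fintype V] [DecidableEq V] (T : SimpleGraph V)
    (hT : T.IsTree) (hcard : 3 ≤ Fintype.card V) :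
    ∃ (v : V) (K H : Finset V), Disjoint K H ∧ K ∪ H = Finset.univ \ {v} ∧
      (∀ x ∈ K, ∀ y ∈ H, ¬ T.Adj x y) ∧
      Fintype.card V - 1 ≤ 3 * K.card ∧ 3 * K.card ≤ 2 * (Fintype.card V - 1) ∧
      Fintype.card V - 1 ≤ 3 * H.card ∧ 3 * H.card ≤ 2 * (Fintype.card V - 1) := by
  exact Stmt2Aux.main T hT hcard
end

section
/- For every tree T_n on n vertices, the Ramsey number R(T_n, C_3) equals 2n - 1. That is: every graph G on 2n - 1 vertices either contains a triangle or its complement contains T_n as a subgraph, and there exists a graph on 2n - 2 vertices witnessing that 2n - 2 does not suffice. -/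
open SimpleGraph Finset

lemma tree_exists_leaf {α : Type*} [Fintype α] [DecidableEq α] {T : SimpleGraph α}
    [DecidableRel T.Adj] (hT : T.IsTree) (h2 : 2 ≤ Fintype.card α) :
    ∃ v, T.degree v = 1 := by
  have hpos : ∀ v, 1 ≤ T.degree v := by
    intro v
    rw [Nat.one_le_iff_ne_zero]
    intro h0
    obtain ⟨w, hw⟩ := Fintype.exists_ne_of_one_lt_card (by omega) v
    obtain ⟨p⟩ := hT.isConnected.preconnected v w
    cases p with
    | nil => exact hw rfl
    | cons h q =>
      have : T.degree v ≠ 0 := by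
        rw [← card_neighborFinset_eq_degree]
        intro hc
        rw [Finset.card_eq_zero] at hc
        have := mem_neighborFinset T v _ |>.2 h
        simp [hc] at this
      exact this h0
  by_contra hno
  push_neg at hno
  have hge : ∀ v, 2 ≤ T.degree v := by
    intro v
    have := hpos v
    have := hno v
    omega
  have hsum : ∑ v, T.degree v = 2 * #T.edgeFinset :=
    T.sum_degrees_eq_twice_card_edges
  have hcard := hT.card_edgeFinset
  have : 2 * Fintype.card α ≤ ∑ v, T.degree v := by
    calc 2 * Fintype.card α = ∑ _v : α, 2 := by simp [mul_comm]
    _ ≤ ∑ v, T.degree v := Finset.sum_le_sum fun v _ => hge v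
  omega

lemma walk_avoid {α : Type*} {T : SimpleGraph α} {v u : α}
    (hu : ∀ x, T.Adj v x → x = u) :
    ∀ (m : ℕ) (a b : α) (ha : a ≠ v) (hb : b ≠ v) (p : T.Walk a b), p.length ≤ m →
      (T.induce {x | x ≠ v}).Reachable ⟨a, ha⟩ ⟨b, hb⟩ := by
  intro m
  induction m with
  | zero =>
    intro a b ha hb p hp
    cases p with
    | nil => exact Reachable.refl _
    | cons h q => simp at hp
  | succ m ih =>
    intro a b ha hb p hp
    cases p with
    | nil => exact Reachable.refl _
    | @cons _ c _ h q =>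
      by_cases hc : c = v
      · have hau : a = u := hu a (hc ▸ h.symm)
        cases q with
        | nil => exact absurd hc hb
        | @cons _ d _ h' q' =>
          have hdu : d = u := hu d (hc ▸ h')
          have hlen : q'.length ≤ m := by
            simp only [Walk.length_cons] at hp; omega
          obtain rfl : a = d := hau.trans hdu.symm
          exact ih a b ha hb q' hlen
      · have hadj : (T.induce {x | x ≠ v}).Adj ⟨a, ha⟩ ⟨c, hc⟩ := h
        have hlen : q.length ≤ m := by
          simp only [Walk.length_cons] at hp; omega
        exact (hadj.reachable).trans (ih c b hc hb q hlen)

lemma induce_tree {α : Type*} [Fintype α] {T : SimpleGraph α}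
    (hT : T.IsTree) {v u : α} (hvu : T.Adj v u) (hu : ∀ x, T.Adj v x → x = u) :
    (T.induce {x | x ≠ v}).IsTree := by
  constructor
  · rw [connected_iff]
    refine ⟨?_, ⟨⟨u, hvu.ne'⟩⟩⟩
    rintro ⟨a, ha⟩ ⟨b, hb⟩
    obtain ⟨p⟩ := hT.isConnected.preconnected a b
    exact walk_avoid hu p.length a b ha hb p le_rfl
  · intro w c hc
    have := hc.map (f := (SimpleGraph.Embedding.induce (G := T) {x | x ≠ v}).toHom)
      (SimpleGraph.Embedding.induce (G := T) {x | x ≠ v}).injective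
    exact hT.IsAcyclic _ this

lemma tree_embed : ∀ (m : ℕ) {α β : Type*} [Fintype α] [Fintype β] [Nonempty β]
    (T : SimpleGraph α) (_hT : T.IsTree) (H : SimpleGraph β) [DecidableRel H.Adj],
    Fintype.card α = m → (∀ b, m - 1 ≤ H.degree b) →
    ∃ f : T →g H, Function.Injective f := by
  intro m
  induction m with
  | zero =>
    intro α β _ _ _ T hT H _ hcard hdeg
    have : Nonempty α := hT.isConnected.nonempty
    rw [Fintype.card_eq_zero_iff] at hcard
    exact (hcard.false this.some).elim
  | succ m ih =>
    intro α β _ _ _ T hT H _ hcard hdeg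
    classical
    by_cases h2 : 2 ≤ Fintype.card α
    · obtain ⟨v, hv⟩ := tree_exists_leaf hT h2
      have hv1 : #(T.neighborFinset v) = 1 := by
        rwa [card_neighborFinset_eq_degree]
      obtain ⟨u, huN⟩ := Finset.card_eq_one.mp hv1
      have hvu : T.Adj v u :=
        (T.mem_neighborFinset v u).1 (by rw [huN]; exact Finset.mem_singleton_self u)
      have hu : ∀ x, T.Adj v x → x = u := fun x hx => by
        have hmem : x ∈ T.neighborFinset v := (T.mem_neighborFinset v x).2 hx
        rwa [huN, Finset.mem_singleton] at hmem
      have hT' := induce_tree hT hvu hu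
      have hcard' : Fintype.card {x | x ≠ v} = m := by
        have h1 : Fintype.card {x | x ≠ v} = Fintype.card {x : α // ¬ x = v} := rfl
        rw [h1, Fintype.card_subtype_compl, Fintype.card_subtype_eq, hcard]
        omega
      have hdeg' : ∀ b, m - 1 ≤ H.degree b := fun b =>
        le_trans (Nat.sub_le m 1) (by simpa using hdeg b)
      obtain ⟨f', hf'⟩ := ih (T.induce {x | x ≠ v}) hT' H hcard' hdeg'
      have huv : u ∈ {x | x ≠ v} := hvu.ne'
      set u' : {x | x ≠ v} := ⟨u, huv⟩ with hu'
      set S : Finset β := Finset.univ.image (fun x : {x | x ≠ v} => f' x) with hS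
      have hScard : S.card = m := by
        rw [hS, Finset.card_image_of_injective _ hf', Finset.card_univ, hcard']
      have hm1 : 1 ≤ m := by omega
      have hu'S : f' u' ∈ S := by
        rw [hS]; exact Finset.mem_image_of_mem _ (Finset.mem_univ u')
      have hNS : ¬ (H.neighborFinset (f' u') ⊆ S) := by
        intro hsub
        have hsub2 : H.neighborFinset (f' u') ⊆ S.erase (f' u') := by
          intro x hx
          refine Finset.mem_erase.2 ⟨?_, hsub hx⟩
          rintro rfl
          exact H.irrefl ((H.mem_neighborFinset _ _).1 hx)
        have hle := Finset.card_le_card hsub2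
        rw [Finset.card_erase_of_mem hu'S, hScard] at hle
        have hdegu := hdeg (f' u')
        rw [← card_neighborFinset_eq_degree] at hdegu
        omega
      obtain ⟨b, hbN, hbS⟩ := Finset.not_subset.1 hNS
      have hbadj : H.Adj (f' u') b := (H.mem_neighborFinset _ _).1 hbN
      set fn : α → β := fun x => if h : x = v then b else f' ⟨x, h⟩ with hfn
      have hmap : ∀ {x y : α}, T.Adj x y → H.Adj (fn x) (fn y) := by
        intro x y hxy
        by_cases hx : x = v
        · have hyu : y = u := hu y (hx ▸ hxy)
          have hyv : y ≠ v := fun h => hxy.ne (hx.trans h.symm)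
          simp only [hfn, dif_pos hx, dif_neg hyv]
          have heq : (⟨y, hyv⟩ : {x | x ≠ v}) = u' := by
            apply Subtype.ext; exact hyu
          rw [heq]
          exact hbadj.symm
        · by_cases hy : y = v
          · have hxu : x = u := hu x (hy ▸ hxy.symm)
            simp only [hfn, dif_neg hx, dif_pos hy]
            have heq : (⟨x, hx⟩ : {x | x ≠ v}) = u' := by
              apply Subtype.ext; exact hxu
            rw [heq]
            exact hbadj
          · simp only [hfn, dif_neg hx, dif_neg hy]
            exact f'.map_adj hxy
      have hinj : Function.Injective fn := by
        intro x y hxy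
        by_cases hx : x = v <;> by_cases hy : y = v
        · rw [hx, hy]
        · simp only [hfn, dif_pos hx, dif_neg hy] at hxy
          exact absurd (hxy ▸ Finset.mem_image_of_mem (fun x : {x | x ≠ v} => f' x)
            (Finset.mem_univ (⟨y, hy⟩ : {x | x ≠ v}))) hbS
        · simp only [hfn, dif_neg hx, dif_pos hy] at hxy
          exact absurd (hxy.symm ▸ Finset.mem_image_of_mem (fun x : {x | x ≠ v} => f' x)
            (Finset.mem_univ (⟨x, hx⟩ : {x | x ≠ v}))) hbS
        · simp only [hfn, dif_neg hx, dif_neg hy] at hxy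
          exact Subtype.ext_iff.1 (hf' hxy)
      exact ⟨⟨fn, hmap⟩, hinj⟩
    · have h1 : Fintype.card α = 1 := by omega
      obtain ⟨a, ha⟩ := Fintype.card_eq_one_iff.mp h1
      obtain ⟨b⟩ := ‹Nonempty β›
      refine ⟨⟨fun _ => b, ?_⟩, ?_⟩
      · intro x y hxy
        exact absurd ((ha x).trans (ha y).symm) hxy.ne
      · intro x y _
        exact (ha x).trans (ha y).symm

lemma ramsey_upper {α : Type*} [Fintype α] (n : ℕ) (T : SimpleGraph α)
    (hT : T.IsTree) (hn : Fintype.card α = n)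
    (G : SimpleGraph (Fin (2 * n - 1))) (hG : G.CliqueFree 3) :
    ∃ f : T →g Gᶜ, Function.Injective f := by
  classical
  have hα : Nonempty α := hT.isConnected.nonempty
  have hn1 : 1 ≤ n := by rw [← hn]; exact Fintype.card_pos
  have hne : Nonempty (Fin (2 * n - 1)) := ⟨⟨0, by omega⟩⟩
  by_cases hbig : ∃ v, n ≤ G.degree v
  · obtain ⟨v, hv⟩ := hbig
    set N := G.neighborFinset v with hN
    have hind : ∀ x ∈ N, ∀ y ∈ N, x ≠ y → ¬ G.Adj x y := by
      intro x hx y hy hne hadj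
      have hvx : G.Adj v x := (G.mem_neighborFinset v x).1 hx
      have hvy : G.Adj v y := (G.mem_neighborFinset v y).1 hy
      exact hG {v, x, y} (is3Clique_triple_iff.2 ⟨hvx, hvy, hadj⟩)
    have hcard : Fintype.card α ≤ Fintype.card N := by
      rw [hn, Fintype.card_coe]
      exact le_trans hv le_rfl
    obtain ⟨e⟩ := Function.Embedding.nonempty_of_card_le hcard
    refine ⟨⟨fun a => (e a : Fin (2 * n - 1)), ?_⟩, ?_⟩
    · intro x y hxy
      have hxyne : e x ≠ e y := fun h => hxy.ne (e.injective h)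
      have hvals : (e x : Fin (2 * n - 1)) ≠ (e y : Fin (2 * n - 1)) :=
        fun h => hxyne (Subtype.ext h)
      exact (G.compl_adj _ _).2 ⟨hvals, hind _ (e x).2 _ (e y).2 hvals⟩
    · intro x y hxy
      exact e.injective (Subtype.ext hxy)
  · push_neg at hbig
    have hdeg : ∀ b : Fin (2 * n - 1), n - 1 ≤ Gᶜ.degree b := by
      intro b
      have h1 : Gᶜ.degree b = Fintype.card (Fin (2 * n - 1)) - 1 - G.degree b :=
        G.degree_compl b
      rw [Fintype.card_fin] at h1
      have := hbig b
      omega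
    exact tree_embed n T hT Gᶜ hn hdeg

lemma ramsey_lower {α : Type*} [Fintype α] (n : ℕ) (T : SimpleGraph α)
    (hT : T.IsTree) (hn : Fintype.card α = n) :
    ∃ G : SimpleGraph (Fin (2 * n - 2)),
      G.CliqueFree 3 ∧ ¬ ∃ f : T →g Gᶜ, Function.Injective f := by
  classical
  have hα : Nonempty α := hT.isConnected.nonempty
  have hn1 : 1 ≤ n := by rw [← hn]; exact Fintype.card_pos
  set p : Fin (2 * n - 2) → Bool := fun x => decide ((x : ℕ) < n - 1) with hp
  refine ⟨⟨fun a b => p a ≠ p b, ⟨by intro a b h; exact Ne.symm h⟩, ⟨by intro a h; exact h rfl⟩⟩, ?_, ?_⟩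
  · intro s hs
    rw [is3Clique_iff] at hs
    obtain ⟨a, b, c, hab, hac, hbc, -⟩ := hs
    have hab' : p a ≠ p b := hab
    have hac' : p a ≠ p c := hac
    have hbc' : p b ≠ p c := hbc
    revert hab' hac' hbc'
    cases p a <;> cases p b <;> cases p c <;> simp
  · rintro ⟨f, hf⟩
    have hcompl : ∀ {a b : α}, T.Adj a b → p (f a) = p (f b) := by
      intro a b h
      have := f.map_adj h
      rw [compl_adj] at this
      exact not_ne_iff.1 this.2
    have key : ∀ {a b : α}, T.Walk a b → p (f a) = p (f b) := by
      intro a b w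
      induction w with
      | nil => rfl
      | cons h q ih => exact (hcompl h).trans ih
    obtain ⟨a0⟩ := hα
    set c := p (f a0) with hc
    set sc : Finset (Fin (2 * n - 2)) := Finset.univ.filter (fun x => p x = c) with hsc
    have hmaps : ∀ a : α, f a ∈ sc := by
      intro a
      rw [hsc, Finset.mem_filter]
      exact ⟨Finset.mem_univ _, (key ((hT.isConnected.preconnected a a0).some)).symm ▸ rfl⟩
    have hcard1 : Fintype.card α ≤ sc.card :=
      Finset.card_le_card_of_injOn f (fun a _ => hmaps a) (fun x _ y _ h => hf h) |>.trans_eq'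
        (by rw [Finset.card_univ])
    have hcard2 : sc.card ≤ n - 1 := by
      cases hcb : c with
      | true =>
        have := Finset.card_le_card_of_injOn (fun x : Fin (2 * n - 2) => (x : ℕ))
          (s := sc) (t := Finset.range (n - 1)) ?_ ?_
        · rwa [Finset.card_range] at this
        · intro x hx
          rw [hsc, Finset.mem_coe, Finset.mem_filter, hcb] at hx
          have : (x : ℕ) < n - 1 := by simpa [hp] using hx.2
          exact Finset.mem_range.2 this
        · intro x _ y _ h
          exact Fin.ext h
      | false =>
        have := Finset.card_le_card_of_injOn (fun x : Fin (2 * n - 2) => (x : ℕ) - (n - 1))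
          (s := sc) (t := Finset.range (n - 1)) ?_ ?_
        · rwa [Finset.card_range] at this
        · intro x hx
          rw [hsc, Finset.mem_coe, Finset.mem_filter, hcb] at hx
          have h1 : ¬ ((x : ℕ) < n - 1) := by simpa [hp] using hx.2
          have h2 := x.isLt
          exact Finset.mem_range.2 (show (x : ℕ) - (n - 1) < n - 1 by omega)
        · intro x hx y hy h
          have hx' : p x = c := by simpa [hsc] using hx
          have hy' : p y = c := by simpa [hsc] using hy
          rw [hcb] at hx' hy'
          have h1 : ¬ ((x : ℕ) < n - 1) := by simpa [hp] using hx'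
          have h2 : ¬ ((y : ℕ) < n - 1) := by simpa [hp] using hy'
          have h3 : (x : ℕ) - (n - 1) = (y : ℕ) - (n - 1) := h
          exact Fin.ext (by omega)
    rw [hn] at hcard1
    omega

/-- `R(T_n, C_3) = 2n - 1` for every tree `T_n` on `n` vertices: every graph on `2n - 1`
vertices contains a triangle or its complement contains `T_n`, and there is a graph on
`2n - 2` vertices for which neither holds. -/
theorem stmt_3 {α : Type*} [Fintype α] (n : ℕ) (T : SimpleGraph α)
    (hT : T.IsTree) (hn : Fintype.card α = n) :
    (∀ G : SimpleGraph (Fin (2 * n - 1)),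
      ¬ G.CliqueFree 3 ∨ ∃ f : T →g Gᶜ, Function.Injective f) ∧
    (∃ G : SimpleGraph (Fin (2 * n - 2)),
      G.CliqueFree 3 ∧ ¬ ∃ f : T →g Gᶜ, Function.Injective f) := by
  constructor
  · intro G
    by_cases hG : G.CliqueFree 3
    · exact Or.inr (ramsey_upper n T hT hn G hG)
    · exact Or.inl hG
  · exact ramsey_lower n T hT hn
end

section
/- Let m ≥ 5 be odd, G a C_m-free graph, and S_1, S_2 disjoint subsets of V(G) with ℓ = (m-1)/2. Suppose that for all x, y ∈ S_1 we have |N_{S_2}(x) ∩ N_{S_2}(y)| > ℓ, that for all x, y ∈ S_2 we have |N_{S_1}(x) ∩ N_{S_1}(y)| > ℓ, and that |S_1| ≥ ℓ + 1. Then the induced subgraph G[S_1] has no edges. -/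
open SimpleGraph

private def walkOfFn {V : Type*} (G : SimpleGraph V) (f : ℕ → V) :
    ∀ n, (∀ i, i < n → G.Adj (f i) (f (i+1))) → G.Walk (f 0) (f n)
  | 0, _ => Walk.nil
  | (n+1), h =>
    (walkOfFn G f n (fun i hi => h i (Nat.lt_succ_of_lt hi))).concat (h n n.lt_succ_self)

private lemma walkOfFn_length {V : Type*} (G : SimpleGraph V) (f : ℕ → V) :
    ∀ n h, (walkOfFn G f n h).length = n
  | 0, _ => rfl
  | (n+1), h => by
    simp [walkOfFn, Walk.length_concat, walkOfFn_length G f n]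

private lemma walkOfFn_support {V : Type*} (G : SimpleGraph V) (f : ℕ → V) :
    ∀ n h, (walkOfFn G f n h).support = (List.range (n+1)).map f
  | 0, _ => rfl
  | (n+1), h => by
    rw [walkOfFn, Walk.support_concat, walkOfFn_support G f n,
      List.range_succ (n := n+1), List.map_append]
    simp

private lemma walkOfFn_edges {V : Type*} (G : SimpleGraph V) (f : ℕ → V) :
    ∀ n h, (walkOfFn G f n h).edges = (List.range n).map (fun i => s(f i, f (i+1)))
  | 0, _ => rfl
  | (n+1), h => by
    rw [walkOfFn, Walk.edges_concat, walkOfFn_edges G f n, List.range_succ, List.map_append]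
    simp

/-- Let `m = 2ℓ + 1 ≥ 5` be odd and `G` a graph with no cycle of length `m`. If `S₁, S₂`
are disjoint vertex sets such that any two vertices of `S₁` have more than `ℓ` common
neighbors in `S₂`, any two vertices of `S₂` have more than `ℓ` common neighbors in `S₁`,
and `|S₁| ≥ ℓ + 1`, then `G[S₁]` has no edges. -/
theorem stmt_10 {V : Type*} [Fintype V] [DecidableEq V] (m ℓ : ℕ)
    (hm : 5 ≤ m) (hml : m = 2 * ℓ + 1)
    (G : SimpleGraph V) [DecidableRel G.Adj]
    (hG : ¬ ∃ (u : V) (p : G.Walk u u), p.IsCycle ∧ p.length = m)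
    (S₁ S₂ : Finset V) (hdisj : Disjoint S₁ S₂)
    (h1 : ∀ x ∈ S₁, ∀ y ∈ S₁,
      ℓ < (S₂.filter (fun z => G.Adj x z ∧ G.Adj y z)).card)
    (h2 : ∀ x ∈ S₂, ∀ y ∈ S₂,
      ℓ < (S₁.filter (fun z => G.Adj x z ∧ G.Adj y z)).card)
    (hS₁ : ℓ + 1 ≤ S₁.card) :
    ∀ x ∈ S₁, ∀ y ∈ S₁, ¬ G.Adj x y := by
  intro x hx y hy hxy
  have hℓ : 2 ≤ ℓ := by omega
  have hxney : x ≠ y := G.ne_of_adj hxy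
  -- choose T ⊆ S₁ of size ℓ+1 containing x and y
  have hsub : ({x, y} : Finset V) ⊆ S₁ := by
    intro v hv; simp at hv; rcases hv with rfl | rfl <;> assumption
  obtain ⟨T, hxyT, hTS, hTcard⟩ :=
    Finset.exists_subsuperset_card_eq hsub
      (by rw [Finset.card_insert_of_notMem (by simpa using hxney), Finset.card_singleton]; omega)
      hS₁
  set M : Finset V := T \ {x, y} with hM
  have hMcard : M.card = ℓ - 1 := by
    rw [hM, Finset.card_sdiff_of_subset hxyT, hTcard,
      Finset.card_insert_of_notMem (by simpa using hxney), Finset.card_singleton]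
    omega
  -- the list of "even" vertices: y first, x last
  set L : List V := (y :: M.toList) ++ [x] with hL
  have hMlen : M.toList.length = ℓ - 1 := by rw [Finset.length_toList, hMcard]
  have hLlen : L.length = ℓ + 1 := by simp [hL, hMlen]; omega
  have hxM : x ∉ M := by simp [hM]
  have hyM : y ∉ M := by simp [hM]
  have hLnodup : L.Nodup := by
    rw [hL]
    refine List.nodup_cons.2 ⟨?_, ?_⟩
    · intro h
      rcases List.mem_append.1 h with h | h
      · exact hyM (Finset.mem_toList.1 h)
      · exact hxney.symm (List.mem_singleton.1 h)
    · refine List.Nodup.append (Finset.nodup_toList M) (List.nodup_singleton x) ?_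
      intro a ha hb
      rw [List.mem_singleton] at hb
      subst hb
      exact hxM (Finset.mem_toList.1 ha)
  have hLS : ∀ v ∈ L, v ∈ S₁ := by
    intro v hv
    simp [hL] at hv
    rcases hv with rfl | hv | rfl
    · exact hy
    · simp only [hM, Finset.mem_sdiff] at hv
      exact hTS hv.1
    · exact hx
  set ev : ℕ → V := fun j => L.getD j x with hev
  have hev0 : ev 0 = y := rfl
  have hevl : ev ℓ = x := by
    have h1' : ℓ < L.length := by omega
    show L.getD ℓ x = x
    rw [List.getD_eq_getElem L x h1']
    exact List.getElem_concat_length (l := y :: M.toList) (a := x) (i := ℓ) (by simp [hMlen]; omega) _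
  have hevS : ∀ j, j ≤ ℓ → ev j ∈ S₁ := by
    intro j hj
    apply hLS
    show L.getD j x ∈ L
    rw [List.getD_eq_getElem L x (by omega)]
    exact List.getElem_mem _
  have hevinj : ∀ a ≤ ℓ, ∀ b ≤ ℓ, ev a = ev b → a = b := by
    intro a ha b hb hab
    have ha' : a < L.length := by omega
    have hb' : b < L.length := by omega
    rw [hev] at hab
    simp only at hab
    rw [List.getD_eq_getElem L x ha', List.getD_eq_getElem L x hb'] at hab
    exact (List.Nodup.getElem_inj_iff hLnodup).1 hab
  -- common neighbour sets
  set C : Fin ℓ → Finset V :=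
    fun i => S₂.filter (fun z => G.Adj (ev i.1) z ∧ G.Adj (ev (i.1+1)) z) with hC
  have hCcard : ∀ i, ℓ < (C i).card := by
    intro i
    exact h1 _ (hevS i.1 (by omega)) _ (hevS (i.1+1) (by omega))
  have hHall : ∀ s : Finset (Fin ℓ), s.card ≤ (s.biUnion C).card := by
    intro s
    rcases s.eq_empty_or_nonempty with rfl | ⟨i, hi⟩
    · simp
    · have h1' : s.card ≤ ℓ := by
        calc s.card ≤ Fintype.card (Fin ℓ) := Finset.card_le_univ s
        _ = ℓ := Fintype.card_fin ℓ
      have h2' : (C i).card ≤ (s.biUnion C).card :=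
        Finset.card_le_card (fun v hv => Finset.mem_biUnion.2 ⟨i, hi, hv⟩)
      have := hCcard i
      omega
  obtain ⟨o, hoinj, hoC⟩ := (Finset.all_card_le_biUnion_card_iff_exists_injective C).1 hHall
  set od : ℕ → V := fun j => o ⟨min j (ℓ-1), by omega⟩ with hod
  have hodS : ∀ j, od j ∈ S₂ := fun j => (Finset.mem_filter.1 (hoC _)).1
  have hodadj : ∀ j, j < ℓ → G.Adj (ev j) (od j) ∧ G.Adj (ev (j+1)) (od j) := by
    intro j hj
    have : od j = o ⟨j, hj⟩ := by simp [hod, Nat.min_eq_left (by omega : j ≤ ℓ - 1)]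
    rw [this]
    exact (Finset.mem_filter.1 (hoC ⟨j, hj⟩)).2
  -- the full vertex function
  set f : ℕ → V := fun k => if k % 2 = 0 then ev (k/2) else od (k/2) with hf
  have feven : ∀ k, k % 2 = 0 → f k = ev (k/2) := by
    intro k hk; rw [hf]; exact if_pos hk
  have fodd : ∀ k, k % 2 = 1 → f k = od (k/2) := by
    intro k hk; rw [hf]; exact if_neg (by omega)
  have hadj : ∀ i, i < 2*ℓ → G.Adj (f i) (f (i+1)) := by
    intro i hi
    rcases Nat.even_or_odd i with ⟨j, hj⟩ | ⟨j, hj⟩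
    · rw [feven i (by omega), fodd (i+1) (by omega), show i/2 = j from by omega,
        show (i+1)/2 = j from by omega]
      exact (hodadj j (by omega)).1
    · rw [fodd i (by omega), feven (i+1) (by omega), show i/2 = j from by omega,
        show (i+1)/2 = j+1 from by omega]
      exact (hodadj j (by omega)).2.symm
  have hfS₁ : ∀ k, k % 2 = 0 → k ≤ 2*ℓ → f k ∈ S₁ := by
    intro k hk hk'; rw [feven k hk]; exact hevS _ (by omega)
  have hfS₂ : ∀ k, k % 2 = 1 → f k ∈ S₂ := by
    intro k hk; rw [fodd k hk]; exact hodS _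
  have hfinj : ∀ a ≤ 2*ℓ, ∀ b ≤ 2*ℓ, f a = f b → a = b := by
    intro a ha b hb hab
    rcases Nat.even_or_odd a with ⟨j, hj⟩ | ⟨j, hj⟩ <;>
      rcases Nat.even_or_odd b with ⟨j', hj'⟩ | ⟨j', hj'⟩
    · rw [feven a (by omega), feven b (by omega)] at hab
      have := hevinj (a/2) (by omega) (b/2) (by omega) hab
      omega
    · exfalso
      have m1 := hfS₁ a (by omega) ha
      have m2 := hfS₂ b (by omega)
      rw [hab] at m1
      exact Finset.disjoint_left.1 hdisj m1 m2
    · exfalso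
      have m1 := hfS₁ b (by omega) hb
      have m2 := hfS₂ a (by omega)
      rw [← hab] at m1
      exact Finset.disjoint_left.1 hdisj m1 m2
    · rw [fodd a (by omega), fodd b (by omega), hod] at hab
      have hjo := hoinj hab
      have : min (a/2) (ℓ-1) = min (b/2) (ℓ-1) := congrArg Fin.val hjo
      omega
  -- build the walk
  have hf0 : f 0 = y := by rw [feven 0 rfl]; exact hev0
  have hfN : f (2*ℓ) = x := by
    rw [feven (2*ℓ) (by omega), show 2*ℓ/2 = ℓ from by omega]
    exact hevl
  set p : G.Walk y x := ((walkOfFn G f (2*ℓ) hadj).copy hf0 hfN) with hp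
  have hpsupp : p.support = (List.range (2*ℓ+1)).map f := by
    rw [hp, Walk.support_copy, walkOfFn_support]
  have hpedges : p.edges = (List.range (2*ℓ)).map (fun i => s(f i, f (i+1))) := by
    rw [hp, Walk.edges_copy, walkOfFn_edges]
  have hppath : p.IsPath := by
    apply Walk.IsPath.mk'
    rw [hpsupp]
    apply List.Nodup.map_on _ (List.nodup_range)
    intro a ha b hb hab
    rw [List.mem_range] at ha hb
    exact hfinj a (by omega) b (by omega) hab
  have hmem : s(x, y) ∉ p.edges := by
    rw [hpedges]
    intro hmem
    rw [List.mem_map] at hmem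
    obtain ⟨i, hi, hie⟩ := hmem
    rw [List.mem_range] at hi
    rw [Sym2.eq_iff] at hie
    -- one of f i, f (i+1) is odd-indexed hence in S₂
    have : f i ∈ S₂ ∨ f (i+1) ∈ S₂ := by
      rcases Nat.even_or_odd i with ⟨j, hj⟩ | ⟨j, hj⟩
      · right; exact hfS₂ (i+1) (by omega)
      · left; exact hfS₂ i (by omega)
    rcases this with h' | h' <;> rcases hie with ⟨e1, e2⟩ | ⟨e1, e2⟩
    · exact Finset.disjoint_left.1 hdisj hx (e1 ▸ h')
    · exact Finset.disjoint_left.1 hdisj hy (e1 ▸ h')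
    · exact Finset.disjoint_left.1 hdisj hy (e2 ▸ h')
    · exact Finset.disjoint_left.1 hdisj hx (e2 ▸ h')
  refine hG ⟨x, Walk.cons hxy p, ?_, ?_⟩
  · exact (Walk.cons_isCycle_iff p hxy).2 ⟨hppath, hmem⟩
  · rw [Walk.length_cons, hp, Walk.length_copy, walkOfFn_length]; omega
end

section
/- Let m ≥ 5 be odd with ℓ = (m-1)/2, and let G be a C_m-free graph with disjoint vertex sets S_1, S_2 such that for all x, y ∈ S_1, |N_{S_2}(x) ∩ N_{S_2}(y)| > ℓ, for all x, y ∈ S_2, |N_{S_1}(x) ∩ N_{S_1}(y)| > ℓ, every vertex of S_2 has at least 3 neighbors in S_1, and |S_1| ≥ ℓ. Then no vertex w outside S_1 ∪ S_2 is adjacent both to a vertex of S_1 and to a vertex of S_2. -/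
private lemma pick_aux {V : Type*} [DecidableEq V] (s t : Finset V)
    (h : t.card < s.card) : ∃ b ∈ s, b ∉ t := by
  by_contra h'
  push_neg at h'
  exact absurd (Finset.card_le_card h') (not_le.mpr h)

/-- Let `m = 2ℓ + 1 ≥ 5` be odd and `G` a graph with no cycle of length `m`. If `S₁, S₂`
are disjoint vertex sets such that any two vertices of `S₁` have more than `ℓ` common
neighbors in `S₂`, any two vertices of `S₂` have more than `ℓ` common neighbors in `S₁`,
every vertex of `S₂` has at least `3` neighbors in `S₁`, and `|S₁| ≥ ℓ`, then no vertex
outside `S₁ ∪ S₂` is adjacent both to a vertex of `S₁` and to a vertex of `S₂`. -/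
theorem stmt_11 {V : Type*} [Fintype V] [DecidableEq V] (m ℓ : ℕ)
    (hm : 5 ≤ m) (hml : m = 2 * ℓ + 1)
    (G : SimpleGraph V) [DecidableRel G.Adj]
    (hG : ¬ ∃ (u : V) (p : G.Walk u u), p.IsCycle ∧ p.length = m)
    (S₁ S₂ : Finset V) (hdisj : Disjoint S₁ S₂)
    (h1 : ∀ x ∈ S₁, ∀ y ∈ S₁,
      ℓ < (S₂.filter (fun z => G.Adj x z ∧ G.Adj y z)).card)
    (h2 : ∀ x ∈ S₂, ∀ y ∈ S₂,
      ℓ < (S₁.filter (fun z => G.Adj x z ∧ G.Adj y z)).card)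
    (h3 : ∀ y ∈ S₂, 3 ≤ (S₁.filter (fun z => G.Adj y z)).card)
    (hS₁ : ℓ ≤ S₁.card) :
    ∀ w : V, w ∉ S₁ ∪ S₂ →
      ¬ ((∃ x ∈ S₁, G.Adj w x) ∧ (∃ y ∈ S₂, G.Adj w y)) := by
  rintro w hw ⟨⟨x, hx, hwx⟩, ⟨y, hy, hwy⟩⟩
  have hl2 : 2 ≤ ℓ := by omega
  have hw1 : w ∉ S₁ := fun h => hw (Finset.mem_union_left _ h)
  have hw2 : w ∉ S₂ := fun h => hw (Finset.mem_union_right _ h)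
  have hne12 : ∀ {u v : V}, u ∈ S₁ → v ∈ S₂ → u ≠ v := by
    intro u v hu hv h
    exact Finset.disjoint_left.mp hdisj hu (h ▸ hv)
  -- y has more than ℓ neighbors in S₁
  have hyT : ℓ < (S₁.filter fun z => G.Adj y z).card := by
    refine lt_of_lt_of_le (h2 y hy y hy) (Finset.card_le_card ?_)
    intro z hz
    simp only [Finset.mem_filter] at hz ⊢
    exact ⟨hz.1, hz.2.1⟩
  set T : Finset V := (S₁.filter fun z => G.Adj y z).erase x with hTdef
  have hTcard : ℓ - 1 ≤ T.card := by
    have h := Finset.pred_card_le_card_erase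
      (s := S₁.filter fun z => G.Adj y z) (a := x)
    rw [← hTdef] at h
    omega
  obtain ⟨A, hAT, hAcard⟩ := Finset.exists_subset_card_eq hTcard
  have hAS1 : ∀ a ∈ A, a ∈ S₁ := by
    intro a ha
    have := hAT ha
    rw [hTdef, Finset.mem_erase, Finset.mem_filter] at this
    exact this.2.1
  have hAy : ∀ a ∈ A, G.Adj y a := by
    intro a ha
    have := hAT ha
    rw [hTdef, Finset.mem_erase, Finset.mem_filter] at this
    exact this.2.2
  have hAx : ∀ a ∈ A, a ≠ x := by
    intro a ha
    have := hAT ha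
    rw [hTdef, Finset.mem_erase] at this
    exact this.1
  -- inductive construction of the alternating path
  have key : ∀ i : ℕ, 1 ≤ i → i + 1 ≤ ℓ →
      ∃ (c : V) (R : Finset V) (p : G.Walk c x),
        c ∈ A ∧ R ⊆ A ∧ R.card + i + 1 = ℓ ∧
        p.IsPath ∧ p.length = 2 * i ∧
        (∀ v ∈ p.support, v ∈ S₁ ∨ v ∈ S₂) ∧
        y ∉ p.support ∧
        (∀ r ∈ R, r ∉ p.support) ∧
        (p.support.toFinset ∩ S₂).card ≤ i := by
    intro i hi1
    induction i, hi1 using Nat.le_induction with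
    | base =>
      intro hle
      have hApos : 0 < A.card := by omega
      obtain ⟨a1, ha1⟩ := Finset.card_pos.mp hApos
      have ha1S1 : a1 ∈ S₁ := hAS1 a1 ha1
      have hb : ℓ < (S₂.filter (fun z => G.Adj x z ∧ G.Adj a1 z)).card :=
        h1 x hx a1 ha1S1
      obtain ⟨b1, hb1mem, hb1y⟩ :=
        pick_aux (S₂.filter (fun z => G.Adj x z ∧ G.Adj a1 z)) {y}
          (by simp; omega)
      rw [Finset.mem_filter] at hb1mem
      obtain ⟨hb1S2, hxb1, ha1b1⟩ := hb1mem
      have hb1y' : b1 ≠ y := by simpa using hb1y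
      refine ⟨a1, A.erase a1, .cons ha1b1 (.cons hxb1.symm .nil), ha1,
        Finset.erase_subset _ _, ?_, ?_, by simp, ?_, ?_, ?_, ?_⟩
      · rw [Finset.card_erase_of_mem ha1]; omega
      · simp only [SimpleGraph.Walk.cons_isPath_iff, SimpleGraph.Walk.support_cons,
          SimpleGraph.Walk.support_nil, List.mem_cons, List.mem_nil_iff, or_false]
        refine ⟨⟨⟨by simp, by simp⟩, ?_⟩, ?_⟩
        · simpa using (hne12 hx hb1S2).symm
        · push_neg
          exact ⟨hne12 ha1S1 hb1S2, hAx a1 ha1⟩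
      · intro v hv
        simp only [SimpleGraph.Walk.support_cons, SimpleGraph.Walk.support_nil,
          List.mem_cons, List.mem_nil_iff, or_false] at hv
        rcases hv with rfl | rfl | rfl
        · exact Or.inl ha1S1
        · exact Or.inr hb1S2
        · exact Or.inl hx
      · simp only [SimpleGraph.Walk.support_cons, SimpleGraph.Walk.support_nil,
          List.mem_cons, List.mem_nil_iff, or_false]
        push_neg
        exact ⟨(hne12 ha1S1 hy).symm, hb1y'.symm, (hne12 hx hy).symm⟩
      · intro r hr
        rw [Finset.mem_erase] at hr
        simp only [SimpleGraph.Walk.support_cons, SimpleGraph.Walk.support_nil,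
          List.mem_cons, List.mem_nil_iff, or_false]
        push_neg
        exact ⟨hr.1, hne12 (hAS1 r hr.2) hb1S2, hAx r hr.2⟩
      · have hsub : ((SimpleGraph.Walk.cons ha1b1
            (SimpleGraph.Walk.cons hxb1.symm .nil)).support.toFinset ∩ S₂) ⊆ {b1} := by
          intro v hv
          simp only [Finset.mem_inter, List.mem_toFinset,
            SimpleGraph.Walk.support_cons, SimpleGraph.Walk.support_nil,
            List.mem_cons, List.mem_nil_iff, or_false] at hv
          rcases hv.1 with rfl | rfl | rfl
          · exact absurd hv.2 (Finset.disjoint_left.mp hdisj ha1S1)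
          · simp
          · exact absurd hv.2 (Finset.disjoint_left.mp hdisj hx)
        calc _ ≤ ({b1} : Finset V).card := Finset.card_le_card hsub
          _ = 1 := by simp
    | succ i hi ih =>
      intro hle
      obtain ⟨c, R, p, hcA, hRA, hRcard, hpath, hlen, hsub, hyp, hR, hcard⟩ :=
        ih (by omega)
      have hRpos : 0 < R.card := by omega
      obtain ⟨a', ha'R⟩ := Finset.card_pos.mp hRpos
      have ha'A : a' ∈ A := hRA ha'R
      have ha'S1 : a' ∈ S₁ := hAS1 a' ha'A
      have hcS1 : c ∈ S₁ := hAS1 c hcA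
      have hbig : ℓ < (S₂.filter (fun z => G.Adj c z ∧ G.Adj a' z)).card :=
        h1 c hcS1 a' ha'S1
      have hFcard : (insert y (p.support.toFinset ∩ S₂)).card < ℓ := by
        have := Finset.card_insert_le y (p.support.toFinset ∩ S₂)
        omega
      obtain ⟨b', hb'mem, hb'F⟩ :=
        pick_aux (S₂.filter (fun z => G.Adj c z ∧ G.Adj a' z))
          (insert y (p.support.toFinset ∩ S₂)) (by omega)
      rw [Finset.mem_filter] at hb'mem
      obtain ⟨hb'S2, hcb', ha'b'⟩ := hb'mem
      have hb'y : b' ≠ y := fun h => hb'F (by simp [h])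
      have hb'p : b' ∉ p.support := by
        intro h
        exact hb'F (Finset.mem_insert_of_mem
          (Finset.mem_inter.mpr ⟨List.mem_toFinset.mpr h, hb'S2⟩))
      have ha'p : a' ∉ p.support := hR a' ha'R
      refine ⟨a', R.erase a', .cons ha'b' (.cons hcb'.symm p), ha'A,
        (Finset.erase_subset _ _).trans hRA, ?_, ?_, ?_, ?_, ?_, ?_, ?_⟩
      · rw [Finset.card_erase_of_mem ha'R]; omega
      · simp only [SimpleGraph.Walk.cons_isPath_iff, SimpleGraph.Walk.support_cons,
          List.mem_cons]
        refine ⟨⟨hpath, hb'p⟩, ?_⟩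
        push_neg
        exact ⟨hne12 ha'S1 hb'S2, ha'p⟩
      · simp only [SimpleGraph.Walk.length_cons]; omega
      · intro v hv
        simp only [SimpleGraph.Walk.support_cons, List.mem_cons] at hv
        rcases hv with rfl | rfl | hv
        · exact Or.inl ha'S1
        · exact Or.inr hb'S2
        · exact hsub v hv
      · simp only [SimpleGraph.Walk.support_cons, List.mem_cons]
        push_neg
        exact ⟨(hne12 ha'S1 hy).symm, hb'y.symm, hyp⟩
      · intro r hr
        rw [Finset.mem_erase] at hr
        simp only [SimpleGraph.Walk.support_cons, List.mem_cons]
        push_neg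
        exact ⟨hr.1, hne12 (hAS1 r (hRA hr.2)) hb'S2, hR r hr.2⟩
      · have hsub2 : ((SimpleGraph.Walk.cons ha'b'
            (SimpleGraph.Walk.cons hcb'.symm p)).support.toFinset ∩ S₂)
            ⊆ insert b' (p.support.toFinset ∩ S₂) := by
          intro v hv
          simp only [Finset.mem_inter, List.mem_toFinset,
            SimpleGraph.Walk.support_cons, List.mem_cons] at hv
          rcases hv.1 with rfl | rfl | hvp
          · exact absurd hv.2 (Finset.disjoint_left.mp hdisj ha'S1)
          · exact Finset.mem_insert_self _ _
          · exact Finset.mem_insert_of_mem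
              (Finset.mem_inter.mpr ⟨List.mem_toFinset.mpr hvp, hv.2⟩)
        calc _ ≤ (insert b' (p.support.toFinset ∩ S₂)).card :=
              Finset.card_le_card hsub2
          _ ≤ (p.support.toFinset ∩ S₂).card + 1 := Finset.card_insert_le _ _
          _ ≤ i + 1 := by omega
  -- extract the final path and close the cycle
  obtain ⟨c, R, p, hcA, hRA, hRcard, hpath, hlen, hsub, hyp, hR, hcard⟩ :=
    key (ℓ - 1) (by omega) (by omega)
  have hwp : w ∉ p.support := by
    intro h
    rcases hsub w h with h' | h'
    · exact hw1 h'
    · exact hw2 h'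
  have hcS1 : c ∈ S₁ := hAS1 c hcA
  have hyc : G.Adj y c := hAy c hcA
  have hxw : G.Adj x w := hwx.symm
  set r0 : G.Walk c w := p.concat hxw with hr0
  have hr0path : r0.IsPath := by
    rw [hr0, SimpleGraph.Walk.isPath_def, SimpleGraph.Walk.support_concat,
      List.nodup_append]
    exact ⟨hpath.support_nodup, List.nodup_singleton w,
      by simpa using fun (a : V) (ha : a ∈ p.support) (h : a = w) => hwp (h ▸ ha)⟩
  have hyr0 : y ∉ r0.support := by
    rw [hr0, SimpleGraph.Walk.support_concat, List.mem_append]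
    push_neg
    refine ⟨hyp, ?_⟩
    simp only [List.mem_singleton]
    exact fun h => hw2 (h ▸ hy)
  set r1 : G.Walk y w := .cons hyc r0 with hr1
  have hr1path : r1.IsPath := hr0path.cons hyr0
  have hedge : s(w, y) ∉ r1.edges := by
    rw [hr1, SimpleGraph.Walk.edges_cons, hr0, SimpleGraph.Walk.edges_concat,
      List.concat_eq_append, List.mem_cons, List.mem_append, List.mem_singleton]
    push_neg
    refine ⟨?_, ?_, ?_⟩
    · intro h
      rw [Sym2.eq_iff] at h
      rcases h with ⟨h1, _⟩ | ⟨h1, _⟩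
      · exact hw2 (h1 ▸ hy)
      · exact hw1 (h1 ▸ hcS1)
    · intro h
      exact hwp (p.fst_mem_support_of_mem_edges h)
    · intro h
      rw [Sym2.eq_iff] at h
      rcases h with ⟨h1, _⟩ | ⟨_, h2⟩
      · exact hw1 (h1 ▸ hx)
      · exact (hne12 hx hy).symm h2
  have hcyc : (SimpleGraph.Walk.cons hwy r1).IsCycle :=
    (SimpleGraph.Walk.cons_isCycle_iff r1 hwy).mpr ⟨hr1path, hedge⟩
  refine hG ⟨w, .cons hwy r1, hcyc, ?_⟩
  rw [hr1, SimpleGraph.Walk.length_cons, SimpleGraph.Walk.length_cons, hr0,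
    SimpleGraph.Walk.length_concat, hlen]
  omega
end

section
/- Let F be a forest whose components are C_1, ..., C_d ordered by size, with |C_i| < N/2 for all i and |C_1| + ... + |C_d| = N - 1, where d ≥ 3 and N ≥ 4. Then the components can be partitioned into two groups whose total sizes each lie between (N-1)/3 and 2(N-1)/3. -/
/-- Let `c 0 ≤ c 1 ≤ ... ≤ c (d-1)` be the sizes of the `d ≥ 3` components of a forest,
with `c i < N / 2` for all `i` and total `N - 1`, where `N ≥ 4`. Then the components can
be split into two groups whose total sizes both lie between `(N-1)/3` and `2(N-1)/3`. -/
theorem stmt_16 (d N : ℕ) (hd : 3 ≤ d) (hN : 4 ≤ N) (c : Fin d → ℕ)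
    (hmono : Monotone c) (hsmall : ∀ i, 2 * c i < N)
    (hsum : ∑ i, c i = N - 1) :
    ∃ I : Finset (Fin d),
      N - 1 ≤ 3 * ∑ i ∈ I, c i ∧ 3 * ∑ i ∈ I, c i ≤ 2 * (N - 1) ∧
      N - 1 ≤ 3 * ∑ i ∈ Iᶜ, c i ∧ 3 * ∑ i ∈ Iᶜ, c i ≤ 2 * (N - 1) := by
  classical
  set g : ℕ → ℕ := fun m => ∑ i ∈ Finset.univ.filter (fun i : Fin d => (i : ℕ) < m), c i
    with hg
  have hgd : g d = N - 1 := by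
    rw [← hsum]
    show ∑ i ∈ Finset.univ.filter (fun i : Fin d => (i : ℕ) < d), c i = _
    congr 1
    apply Finset.filter_true_of_mem
    intro i _
    exact i.isLt
  have hP : ∃ m, N - 1 ≤ 3 * g m := ⟨d, by omega⟩
  set m := Nat.find hP with hmdef
  have hm : N - 1 ≤ 3 * g m := Nat.find_spec hP
  have hg0 : g 0 = 0 := by simp [hg]
  have hm0 : 0 < m := by
    rcases Nat.eq_zero_or_pos m with h | h
    · rw [h] at hm; omega
    · exact h
  have hmd : m ≤ d := Nat.find_le (by omega)
  have hlt : m - 1 < d := by omega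
  have hprev : ¬ (N - 1 ≤ 3 * g (m - 1)) := Nat.find_min hP (by omega)
  have hstep : g m = g (m - 1) + c ⟨m - 1, hlt⟩ := by
    show (∑ i ∈ Finset.univ.filter (fun i : Fin d => (i : ℕ) < m), c i)
        = (∑ i ∈ Finset.univ.filter (fun i : Fin d => (i : ℕ) < m - 1), c i) + _
    have hset : Finset.univ.filter (fun i : Fin d => (i : ℕ) < m)
        = insert (⟨m - 1, hlt⟩ : Fin d)
            (Finset.univ.filter (fun i : Fin d => (i : ℕ) < m - 1)) := by
      ext i
      simp only [Finset.mem_filter, Finset.mem_univ, true_and, Finset.mem_insert, Fin.ext_iff]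
      omega
    rw [hset, Finset.sum_insert]
    · exact add_comm _ _
    · simp only [Finset.mem_filter, Finset.mem_univ, true_and]
      omega
  have hc := hsmall ⟨m - 1, hlt⟩
  by_cases hcase : 3 * g m ≤ 2 * (N - 1)
  · refine ⟨Finset.univ.filter (fun i : Fin d => (i : ℕ) < m), ?_, ?_, ?_, ?_⟩
    · exact hm
    · exact hcase
    all_goals
      have hcompl : (∑ i ∈ Finset.univ.filter (fun i : Fin d => (i : ℕ) < m), c i) +
          ∑ i ∈ (Finset.univ.filter (fun i : Fin d => (i : ℕ) < m))ᶜ, c i = N - 1 := by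
        rw [Finset.sum_add_sum_compl, hsum]
      have hkey : g m = ∑ i ∈ Finset.univ.filter (fun i : Fin d => (i : ℕ) < m), c i := rfl
      omega
  · refine ⟨{⟨m - 1, hlt⟩}, ?_, ?_, ?_, ?_⟩
    all_goals
      have hcompl : (∑ i ∈ ({(⟨m - 1, hlt⟩ : Fin d)} : Finset (Fin d)), c i) +
          ∑ i ∈ ({(⟨m - 1, hlt⟩ : Fin d)} : Finset (Fin d))ᶜ, c i = N - 1 := by
        rw [Finset.sum_add_sum_compl, hsum]
      rw [Finset.sum_singleton] at *
      omega
end
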